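/- With the setup of Halmos' decomposition for projections P, Q (Tr Q = D_ρ, principal angles θ_k, mean G₂, variance σ²), for every orthonormal basis {b_1,…,b_{D_ρ}} of range(Q) and every λ > 0, the fraction f_λ = (1/D_ρ)·#{k : |⟨b_k, P b_k⟩ − G₂| > λ} satisfies f_λ ≤ (3/λ)·(σ²/4)^{1/3}. -/

import Mathlib

open Matrix Complex Finset Real
open scoped Classical

/-- The outer product `|w⟩⟨w|` as a matrix. -/
noncomputable def outerProd {N : ℕ} (w : Fin N → ℂ) : Matrix (Fin N) (Fin N) ℂ :=
  Matrix.vecMulVec w (star w)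

lemma dot_outer {N : ℕ} (x y z : Fin N → ℂ) :
    star x ⬝ᵥ (outerProd z).mulVec y = (star x ⬝ᵥ z) * (star z ⬝ᵥ y) := by
  simp only [outerProd, Matrix.mulVec, dotProduct, vecMulVec_apply, Pi.star_apply,
    Finset.mul_sum, Finset.sum_mul]
  rw [Finset.sum_comm]
  exact Finset.sum_congr rfl fun j _ => Finset.sum_congr rfl fun i _ => by ring

lemma sumdot_left {n N : ℕ} (c : Fin n → ℂ) (w : Fin n → Fin N → ℂ) (y : Fin N → ℂ) :
    star (∑ l, c l • w l) ⬝ᵥ y = ∑ l, star (c l) * (star (w l) ⬝ᵥ y) := by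
  simp only [dotProduct, Pi.star_apply, Finset.sum_apply, Pi.smul_apply, smul_eq_mul,
    star_sum, star_mul', Finset.sum_mul, Finset.mul_sum]
  rw [Finset.sum_comm]
  exact Finset.sum_congr rfl fun l _ => Finset.sum_congr rfl fun i _ => by ring

lemma sumdot_right {n N : ℕ} (c : Fin n → ℂ) (w : Fin n → Fin N → ℂ) (y : Fin N → ℂ) :
    y ⬝ᵥ (∑ l, c l • w l) = ∑ l, c l * (y ⬝ᵥ w l) := by
  simp only [dotProduct, Finset.sum_apply, Pi.smul_apply, smul_eq_mul,
    Finset.sum_mul, Finset.mul_sum]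
  rw [Finset.sum_comm]
  exact Finset.sum_congr rfl fun l _ => Finset.sum_congr rfl fun i _ => by ring

lemma star_dot {N : ℕ} (x y : Fin N → ℂ) : star (star x ⬝ᵥ y) = star y ⬝ᵥ x := by
  rw [star_dotProduct]; simp

lemma mulVec_sum' {n N : ℕ} (M : Fin n → Matrix (Fin N) (Fin N) ℂ) (y : Fin N → ℂ) :
    (∑ j, M j).mulVec y = ∑ j, (M j).mulVec y := by
  funext i
  simp only [Matrix.mulVec, dotProduct, Finset.sum_apply, Matrix.sum_apply, Finset.sum_mul]
  exact Finset.sum_comm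

lemma dot_sum' {n N : ℕ} (x : Fin N → ℂ) (f : Fin n → Fin N → ℂ) :
    x ⬝ᵥ (∑ j, f j) = ∑ j, x ⬝ᵥ f j := by
  simp only [dotProduct, Finset.sum_apply, Finset.mul_sum]
  exact Finset.sum_comm

lemma mulVec_sum_smul {n N : ℕ} (M : Matrix (Fin N) (Fin N) ℂ) (d : Fin n → ℂ)
    (y : Fin n → Fin N → ℂ) :
    M.mulVec (∑ m, d m • y m) = ∑ m, d m • M.mulVec (y m) := by
  funext i
  simp only [Matrix.mulVec, dotProduct, Finset.sum_apply, Pi.smul_apply, smul_eq_mul,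
    Finset.mul_sum]
  rw [Finset.sum_comm]
  exact Finset.sum_congr rfl fun m _ => Finset.sum_congr rfl fun j _ => by ring

lemma markov_arith {F D L E : ℝ} (hD : 0 < D) (hL : 0 < L) (h : F * L ≤ D * (3 * E)) :
    F / D ≤ 3 / L * E := by
  rw [div_le_iff₀ hD]
  calc F ≤ D * (3 * E) / L := by rw [le_div_iff₀ hL]; exact h
    _ = 3 / L * E * D := by ring

lemma cube_eq {a b : ℝ} (ha : 0 ≤ a) (hb : 0 ≤ b) (h : a ^ 3 = b ^ 3) : a = b :=
  (pow_left_strictMonoOn₀ (M₀ := ℝ) (n := 3) (by norm_num)).injOn ha hb h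

/-- In the Halmos setup for projections `P`, `Q` (principal angles `θ_k`, mean
`G₂`, variance `σ²` of `cos²θ_k`), for every orthonormal basis `{b_k}` of `range Q` and every
`λ > 0`, the fraction `f_λ` of basis states with `|⟨b_k, P b_k⟩ − G₂| > λ` satisfies
`f_λ ≤ (3/λ)·(σ²/4)^{1/3}`. -/
theorem stmt5
    {N DR Dρ : ℕ} (hle : Dρ ≤ DR) (hDρ : 0 < Dρ)
    (P Q : Matrix (Fin N) (Fin N) ℂ)
    (hPh : P.IsHermitian) (hPi : P * P = P)
    (hQh : Q.IsHermitian) (hQi : Q * Q = Q)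
    (a : Fin (DR - Dρ) → (Fin N → ℂ)) (u v : Fin Dρ → (Fin N → ℂ))
    (θ : Fin Dρ → ℝ)
    (hθ : ∀ k, θ k ∈ Set.Icc (0 : ℝ) (π / 2))
    (ha : ∀ j m, star (a j) ⬝ᵥ a m = if j = m then 1 else 0)
    (hu : ∀ k l, star (u k) ⬝ᵥ u l = if k = l then 1 else 0)
    (hv : ∀ k l, star (v k) ⬝ᵥ v l = if k = l then 1 else 0)
    (hau : ∀ j k, star (a j) ⬝ᵥ u k = 0)
    (hav : ∀ j k, star (a j) ⬝ᵥ v k = 0)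
    (huv : ∀ k l, star (u k) ⬝ᵥ v l = 0)
    (w : Fin Dρ → (Fin N → ℂ))
    (hw : ∀ k, w k = fun i =>
      (Real.cos (θ k) : ℂ) * u k i + (Real.sin (θ k) : ℂ) * v k i)
    (hP : P = (∑ j, outerProd (a j)) + ∑ k, outerProd (u k))
    (hQ : Q = ∑ k, outerProd (w k))
    (G₂ σsq : ℝ)
    (hG : G₂ = (1 / (Dρ : ℝ)) * ∑ k, (Real.cos (θ k)) ^ 2)
    (hσ : σsq = (1 / (Dρ : ℝ)) * ∑ k, ((Real.cos (θ k)) ^ 2 - G₂) ^ 2)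
    (b : Fin Dρ → (Fin N → ℂ))
    (hb : ∀ k l, star (b k) ⬝ᵥ b l = if k = l then 1 else 0)
    (hbmem : ∀ k, b k ∈ Submodule.span ℂ (Set.range w))
    (hbspan : Submodule.span ℂ (Set.range b) = Submodule.span ℂ (Set.range w))
    (lam : ℝ) (hlam : 0 < lam) :
    ((Finset.univ.filter
        (fun k => lam < |(star (b k) ⬝ᵥ P.mulVec (b k)).re - G₂|)).card : ℝ) / Dρ
      ≤ (3 / lam) * (σsq / 4) ^ ((1 : ℝ) / 3) := by
  have hDρpos : (0 : ℝ) < Dρ := by exact_mod_cast hDρ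
  have hDρne : (Dρ : ℝ) ≠ 0 := ne_of_gt hDρpos
  -- decomposition of w
  have hw' : ∀ k, w k = (Real.cos (θ k) : ℂ) • u k + (Real.sin (θ k) : ℂ) • v k := by
    intro k; rw [hw]; funext i; simp
  have hstarL : ∀ (α β : ℝ) (f g y : Fin N → ℂ),
      star ((α : ℂ) • f + (β : ℂ) • g) ⬝ᵥ y
        = (α : ℂ) * (star f ⬝ᵥ y) + (β : ℂ) * (star g ⬝ᵥ y) := by
    intro α β f g y
    simp [star_add, star_smul, add_dotProduct, smul_dotProduct, smul_eq_mul,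
      Complex.star_def, Complex.conj_ofReal]
  have hstarR : ∀ (α β : ℝ) (f g y : Fin N → ℂ),
      star y ⬝ᵥ ((α : ℂ) • f + (β : ℂ) • g)
        = (α : ℂ) * (star y ⬝ᵥ f) + (β : ℂ) * (star y ⬝ᵥ g) := by
    intro α β f g y
    simp [dotProduct_add, dotProduct_smul, smul_eq_mul]
  -- conjugate orthogonality facts
  have hvu : ∀ k l, star (v k) ⬝ᵥ u l = 0 := by
    intro k l
    have := congrArg star (huv l k); rwa [star_dot, star_zero] at this
  have hwa : ∀ k j, star (w k) ⬝ᵥ a j = 0 := by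
    intro k j
    have hua : star (u k) ⬝ᵥ a j = 0 := by
      have := congrArg star (hau j k); rwa [star_dot, star_zero] at this
    have hva : star (v k) ⬝ᵥ a j = 0 := by
      have := congrArg star (hav j k); rwa [star_dot, star_zero] at this
    rw [hw' k, hstarL, hua, hva]; ring
  have haw : ∀ j k, star (a j) ⬝ᵥ w k = 0 := by
    intro j k; rw [hw' k, hstarR, hau, hav]; ring
  have hwu : ∀ k l, star (w k) ⬝ᵥ u l = (Real.cos (θ k) : ℂ) * (if k = l then 1 else 0) := by
    intro k l; rw [hw' k, hstarL, hu, hvu]; ring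
  have hwv : ∀ k l, star (w k) ⬝ᵥ v l = (Real.sin (θ k) : ℂ) * (if k = l then 1 else 0) := by
    intro k l; rw [hw' k, hstarL, hv, huv]; ring
  have huw : ∀ l k, star (u l) ⬝ᵥ w k = (Real.cos (θ k) : ℂ) * (if l = k then 1 else 0) := by
    intro l k; rw [hw' k, hstarR, hu, huv]; ring
  have hww : ∀ k l, star (w k) ⬝ᵥ w l = if k = l then 1 else 0 := by
    intro k l
    rw [hw' l, hstarR, hwu, hwv]
    by_cases h : k = l
    · subst h; simp only [if_pos rfl, mul_one]
      norm_cast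
      nlinarith [Real.sin_sq_add_cos_sq (θ k)]
    · simp [if_neg h]
  -- ⟨w l, P w m⟩
  have hPw : ∀ l m, star (w l) ⬝ᵥ P.mulVec (w m)
      = if l = m then ((Real.cos (θ l) : ℂ)) ^ 2 else 0 := by
    intro l m
    rw [hP, Matrix.add_mulVec, dotProduct_add, mulVec_sum', mulVec_sum', dot_sum', dot_sum']
    simp only [dot_outer, haw, hwa, huw, hwu, mul_zero, zero_mul, Finset.sum_const_zero, zero_add]
    rw [Finset.sum_eq_single l]
    · by_cases h : l = m
      · subst h; simp [sq]
      · simp [h, Ne.symm h]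
    · intro k _ hk
      simp [if_neg (Ne.symm hk)]
    · intro h; exact absurd (Finset.mem_univ l) h
  -- coefficients of b in the w basis
  have hex : ∀ k, ∃ cc : Fin Dρ → ℂ, ∑ l, cc l • w l = b k := by
    intro k
    exact (Submodule.mem_span_range_iff_exists_fun ℂ).mp (hbmem k)
  choose c hc using hex
  have hwb : ∀ l k, star (w l) ⬝ᵥ b k = c k l := by
    intro l k
    conv_lhs => rw [← hc k]
    rw [sumdot_right]
    simp [hww, mul_ite]
  have hrow : ∀ k k', ∑ l, star (c k l) * c k' l = if k = k' then 1 else 0 := by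
    intro k k'
    have h := hb k k'
    conv_lhs at h => rw [← hc k]
    rw [sumdot_left] at h
    simpa [hwb] using h
  -- unitarity : column sums
  have hcol : ∀ l, ∑ k, star (c k l) * c k l = 1 := by
    intro l
    set C : Matrix (Fin Dρ) (Fin Dρ) ℂ := Matrix.of c with hCdef
    have hCC : C * Cᴴ = 1 := by
      ext k k'
      rw [Matrix.mul_apply]
      have : ∑ j, C k j * Cᴴ j k' = ∑ j, star (c k' j) * c k j := by
        refine Finset.sum_congr rfl fun j _ => ?_
        simp [hCdef, Matrix.conjTranspose_apply, mul_comm]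
      rw [this, hrow]
      by_cases h : k = k'
      · subst h; simp
      · simp [Matrix.one_apply, h, Ne.symm h]
    have hCC' : Cᴴ * C = 1 := mul_eq_one_comm.mp hCC
    have h2 : (Cᴴ * C) l l = (1 : Matrix (Fin Dρ) (Fin Dρ) ℂ) l l := by rw [hCC']
    rw [Matrix.mul_apply] at h2
    simp only [Matrix.conjTranspose_apply, Matrix.one_apply_eq] at h2
    simpa [hCdef] using h2
  -- normSq sums
  have hp1 : ∀ k, ∑ l, Complex.normSq (c k l) = 1 := by
    intro k
    have h := hrow k k
    rw [if_pos rfl] at h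
    have e : ∀ l, star (c k l) * c k l = ((Complex.normSq (c k l) : ℝ) : ℂ) := by
      intro l
      rw [Complex.star_def, mul_comm, Complex.mul_conj]
    rw [Finset.sum_congr rfl fun l _ => e l] at h
    exact_mod_cast h
  have hp2 : ∀ l, ∑ k, Complex.normSq (c k l) = 1 := by
    intro l
    have h := hcol l
    have e : ∀ k, star (c k l) * c k l = ((Complex.normSq (c k l) : ℝ) : ℂ) := by
      intro k
      rw [Complex.star_def, mul_comm, Complex.mul_conj]
    rw [Finset.sum_congr rfl fun k _ => e k] at h
    exact_mod_cast h
  -- the diagonal matrix elements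
  have diag : ∀ k, (star (b k) ⬝ᵥ P.mulVec (b k)).re
      = ∑ l, Complex.normSq (c k l) * Real.cos (θ l) ^ 2 := by
    intro k
    have e1 : star (b k) ⬝ᵥ P.mulVec (b k)
        = ∑ l, star (c k l) * (c k l * ((Real.cos (θ l) : ℂ)) ^ 2) := by
      conv_lhs => rw [← hc k]
      rw [mulVec_sum_smul, sumdot_left]
      refine Finset.sum_congr rfl fun l _ => ?_
      congr 1
      rw [sumdot_right]
      simp only [hPw]
      rw [Finset.sum_eq_single l]
      · simp
      · intro m _ hm
        simp [if_neg (Ne.symm hm)]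
      · intro h; exact absurd (Finset.mem_univ l) h
    have e2 : ∀ l, star (c k l) * (c k l * ((Real.cos (θ l) : ℂ)) ^ 2)
        = ((Complex.normSq (c k l) * Real.cos (θ l) ^ 2 : ℝ) : ℂ) := by
      intro l
      rw [Complex.ofReal_mul, Complex.ofReal_pow, Complex.star_def]
      calc (starRingEnd ℂ) (c k l) * (c k l * ((Real.cos (θ l) : ℂ)) ^ 2)
          = (c k l * (starRingEnd ℂ) (c k l)) * ((Real.cos (θ l) : ℂ)) ^ 2 := by ring
        _ = ((Complex.normSq (c k l) : ℝ) : ℂ) * ((Real.cos (θ l) : ℂ)) ^ 2 := by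
            rw [Complex.mul_conj]
    rw [e1, Finset.sum_congr rfl fun l _ => e2 l, ← Complex.ofReal_sum]
    exact Complex.ofReal_re _
  -- bounds on G₂ and the deviations
  have hG0 : 0 ≤ G₂ := by rw [hG]; positivity
  have hG1 : G₂ ≤ 1 := by
    rw [hG]
    have hs : ∑ k, Real.cos (θ k) ^ 2 ≤ (Dρ : ℝ) := by
      calc ∑ k, Real.cos (θ k) ^ 2 ≤ ∑ _k : Fin Dρ, (1 : ℝ) :=
            Finset.sum_le_sum fun k _ => Real.cos_sq_le_one (θ k)
        _ = (Dρ : ℝ) := by simp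
    calc (1 / (Dρ : ℝ)) * ∑ k, Real.cos (θ k) ^ 2
        ≤ (1 / (Dρ : ℝ)) * (Dρ : ℝ) := by
          exact mul_le_mul_of_nonneg_left hs (by positivity)
      _ = 1 := by field_simp
  have hx1 : ∀ l, |Real.cos (θ l) ^ 2 - G₂| ≤ 1 := by
    intro l
    rw [abs_le]
    constructor
    · nlinarith [sq_nonneg (Real.cos (θ l))]
    · nlinarith [Real.cos_sq_le_one (θ l)]
  have hd : ∀ k, (star (b k) ⬝ᵥ P.mulVec (b k)).re - G₂
      = ∑ l, Complex.normSq (c k l) * (Real.cos (θ l) ^ 2 - G₂) := by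
    intro k
    rw [diag k,
      Finset.sum_congr rfl (fun l _ => mul_sub (Complex.normSq (c k l)) (Real.cos (θ l) ^ 2) G₂),
      Finset.sum_sub_distrib, ← Finset.sum_mul, hp1 k, one_mul]
  have hdabs : ∀ k, |(star (b k) ⬝ᵥ P.mulVec (b k)).re - G₂|
      ≤ ∑ l, Complex.normSq (c k l) * |Real.cos (θ l) ^ 2 - G₂| := by
    intro k
    rw [hd k]
    refine (Finset.abs_sum_le_sum_abs _ _).trans ?_
    refine Finset.sum_le_sum fun l _ => ?_
    rw [abs_mul, _root_.abs_of_nonneg (Complex.normSq_nonneg _)]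
  have hsum : ∑ k, |(star (b k) ⬝ᵥ P.mulVec (b k)).re - G₂|
      ≤ ∑ l, |Real.cos (θ l) ^ 2 - G₂| := by
    calc ∑ k, |(star (b k) ⬝ᵥ P.mulVec (b k)).re - G₂|
        ≤ ∑ k, ∑ l, Complex.normSq (c k l) * |Real.cos (θ l) ^ 2 - G₂| :=
          Finset.sum_le_sum fun k _ => hdabs k
      _ = ∑ l, (∑ k, Complex.normSq (c k l)) * |Real.cos (θ l) ^ 2 - G₂| := by
          rw [Finset.sum_comm]
          exact Finset.sum_congr rfl fun l _ => (Finset.sum_mul _ _ _).symm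
      _ = ∑ l, |Real.cos (θ l) ^ 2 - G₂| := by
          refine Finset.sum_congr rfl fun l _ => ?_
          rw [hp2 l, one_mul]
  -- Markov
  have hcard : ((Finset.univ.filter
        (fun k => lam < |(star (b k) ⬝ᵥ P.mulVec (b k)).re - G₂|)).card : ℝ) * lam
      ≤ ∑ k, |(star (b k) ⬝ᵥ P.mulVec (b k)).re - G₂| := by
    set S := Finset.univ.filter
        (fun k => lam < |(star (b k) ⬝ᵥ P.mulVec (b k)).re - G₂|) with hSdef
    calc (S.card : ℝ) * lam = ∑ _k ∈ S, lam := by rw [Finset.sum_const, nsmul_eq_mul]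
      _ ≤ ∑ k ∈ S, |(star (b k) ⬝ᵥ P.mulVec (b k)).re - G₂| :=
          Finset.sum_le_sum fun k hk => (Finset.mem_filter.mp hk).2.le
      _ ≤ ∑ k, |(star (b k) ⬝ᵥ P.mulVec (b k)).re - G₂| :=
          Finset.sum_le_sum_of_subset_of_nonneg (Finset.subset_univ _)
            fun k _ _ => abs_nonneg _
  have hsx2 : ∑ l, (Real.cos (θ l) ^ 2 - G₂) ^ 2 = (Dρ : ℝ) * σsq := by
    rw [hσ]; field_simp
  have hσ0 : 0 ≤ σsq := by rw [hσ]; positivity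
  rcases eq_or_lt_of_le hσ0 with h0 | hpos
  · -- σ² = 0
    have hzero : ∀ l, Real.cos (θ l) ^ 2 - G₂ = 0 := by
      intro l
      have hs : ∑ l, (Real.cos (θ l) ^ 2 - G₂) ^ 2 = 0 := by rw [hsx2, ← h0, mul_zero]
      have := (Finset.sum_eq_zero_iff_of_nonneg (fun l _ => sq_nonneg _)).mp hs l
        (Finset.mem_univ l)
      exact pow_eq_zero_iff (by norm_num) |>.mp this
    have hfil : (Finset.univ.filter
        (fun k => lam < |(star (b k) ⬝ᵥ P.mulVec (b k)).re - G₂|)) = ∅ := by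
      rw [Finset.filter_eq_empty_iff]
      intro k _
      rw [not_lt, hd k]
      simp only [hzero, mul_zero, Finset.sum_const_zero, abs_zero]
      exact hlam.le
    rw [hfil]
    simp only [Finset.card_empty, Nat.cast_zero, zero_div]
    positivity
  · -- σ² > 0
    set L := (2 * σsq) ^ ((1 : ℝ) / 3) with hLdef
    have hL : 0 < L := Real.rpow_pos_of_pos (by linarith) _
    have hkey : ∀ l, |Real.cos (θ l) ^ 2 - G₂|
        ≤ L + (Real.cos (θ l) ^ 2 - G₂) ^ 2 / L ^ 2 := by
      intro l
      rcases le_or_gt |Real.cos (θ l) ^ 2 - G₂| L with h | h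
      · have h2 : (0 : ℝ) ≤ (Real.cos (θ l) ^ 2 - G₂) ^ 2 / L ^ 2 := by positivity
        linarith
      · have h1 := hx1 l
        have hL1 : L < 1 := lt_of_lt_of_le h h1
        have h3 : |Real.cos (θ l) ^ 2 - G₂| * L ^ 2 ≤ (Real.cos (θ l) ^ 2 - G₂) ^ 2 := by
          nlinarith [abs_nonneg (Real.cos (θ l) ^ 2 - G₂), _root_.sq_abs (Real.cos (θ l) ^ 2 - G₂)]
        have h4 : |Real.cos (θ l) ^ 2 - G₂| ≤ (Real.cos (θ l) ^ 2 - G₂) ^ 2 / L ^ 2 := by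
          rw [le_div_iff₀ (by positivity)]
          exact h3
        linarith
    have hXsum : ∑ l, |Real.cos (θ l) ^ 2 - G₂| ≤ (Dρ : ℝ) * (L + σsq / L ^ 2) := by
      calc ∑ l, |Real.cos (θ l) ^ 2 - G₂|
          ≤ ∑ l, (L + (Real.cos (θ l) ^ 2 - G₂) ^ 2 / L ^ 2) :=
            Finset.sum_le_sum fun l _ => hkey l
        _ = (Dρ : ℝ) * L + (∑ l, (Real.cos (θ l) ^ 2 - G₂) ^ 2) / L ^ 2 := by
            rw [Finset.sum_add_distrib, Finset.sum_const, ← Finset.sum_div]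
            simp [nsmul_eq_mul]
        _ = (Dρ : ℝ) * L + (Dρ : ℝ) * σsq / L ^ 2 := by rw [hsx2]
        _ = (Dρ : ℝ) * (L + σsq / L ^ 2) := by ring
    have hid : L + σsq / L ^ 2 = 3 * (σsq / 4) ^ ((1 : ℝ) / 3) := by
      set t := σsq ^ ((1 : ℝ) / 3) with htdef
      have ht : 0 < t := Real.rpow_pos_of_pos hpos _
      have ht3 : t ^ 3 = σsq := by
        rw [htdef, ← Real.rpow_natCast (σsq ^ ((1 : ℝ) / 3)) 3, ← Real.rpow_mul hpos.le]
        norm_num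
      set c2 := (2 : ℝ) ^ ((1 : ℝ) / 3) with hc2def
      have hc2 : 0 < c2 := Real.rpow_pos_of_pos two_pos _
      have hc23 : c2 ^ 3 = 2 := by
        rw [hc2def, ← Real.rpow_natCast ((2 : ℝ) ^ ((1 : ℝ) / 3)) 3,
          ← Real.rpow_mul (by norm_num : (0:ℝ) ≤ 2)]
        norm_num
      have hLe : L = c2 * t := by rw [hLdef, Real.mul_rpow (by norm_num) hpos.le]
      have hE : (σsq / 4) ^ ((1 : ℝ) / 3) = t / c2 ^ 2 := by
        apply cube_eq (Real.rpow_nonneg (by positivity) _) (by positivity)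
        rw [← Real.rpow_natCast ((σsq / 4) ^ ((1 : ℝ) / 3)) 3,
          ← Real.rpow_mul (by positivity)]
        norm_num
        rw [div_pow, ht3]
        have h6 : (c2 ^ 2) ^ 3 = (c2 ^ 3) ^ 2 := by ring
        rw [h6, hc23]
        norm_num
      rw [hLe, hE]
      rw [show σsq = t ^ 3 from ht3.symm]
      have hc2ne : c2 ≠ 0 := ne_of_gt hc2
      have htne : t ≠ 0 := ne_of_gt ht
      field_simp
      linear_combination hc23
    -- conclusion
    have hfinal : ((Finset.univ.filter
        (fun k => lam < |(star (b k) ⬝ᵥ P.mulVec (b k)).re - G₂|)).card : ℝ) * lam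
        ≤ (Dρ : ℝ) * (3 * (σsq / 4) ^ ((1 : ℝ) / 3)) := by
      calc _ ≤ ∑ k, |(star (b k) ⬝ᵥ P.mulVec (b k)).re - G₂| := hcard
        _ ≤ ∑ l, |Real.cos (θ l) ^ 2 - G₂| := hsum
        _ ≤ (Dρ : ℝ) * (L + σsq / L ^ 2) := hXsum
        _ = (Dρ : ℝ) * (3 * (σsq / 4) ^ ((1 : ℝ) / 3)) := by rw [hid]
    exact markov_arith hDρpos hlam hfinal
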